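/- Fix an integer k ≥ 3. Let V_k be the set of natural numbers n such that there is no set S of k−1 natural numbers with every element of S a bit-member of n (i.e., Nat.testBit n a = true for each a ∈ S) and every two distinct elements a, b of S satisfying Nat.testBit a b = true or Nat.testBit b a = true. Consider the simple graph G_k on V_k in which distinct m, n are adjacent iff Nat.testBit m n = true or Nat.testBit n m = true. Then: (1) G_k contains no clique on k vertices; (2) G_k has the extension property relative to the class of K_k-free graphs: for any disjoint finite sets J, D ⊆ V_k such that J contains no (k−1)-element clique of G_k, there exists v ∈ V_k, lying in neither J nor D, adjacent in G_k to every element of J and to no element of D. -/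

import Mathlib

/-- The vertex set: naturals `n` containing no "complete" set of `k - 1` bit-members. -/
def Vk (k : ℕ) : Set ℕ :=
  {n | ¬ ∃ S : Finset ℕ, S.card = k - 1 ∧ (∀ a ∈ S, Nat.testBit n a = true) ∧
    ∀ a ∈ S, ∀ b ∈ S, a ≠ b → (Nat.testBit a b = true ∨ Nat.testBit b a = true)}

/-- The bit graph induced on `Vk k`. -/
def Gk (k : ℕ) : SimpleGraph (Vk k) where
  Adj m n := (m : ℕ) ≠ (n : ℕ) ∧
    (Nat.testBit (m : ℕ) (n : ℕ) = true ∨ Nat.testBit (n : ℕ) (m : ℕ) = true)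
  symm := ⟨fun m n ⟨h, h'⟩ => ⟨h.symm, h'.symm⟩⟩
  loopless := ⟨fun m ⟨h, _⟩ => h rfl⟩

lemma sum_range_two_pow (n : ℕ) : ∑ a ∈ Finset.range n, 2 ^ a = 2 ^ n - 1 := by
  induction n with
  | zero => simp
  | succ m ih => rw [Finset.sum_range_succ, ih]; have := Nat.one_le_two_pow (n := m); omega

lemma sum_two_pow_lt {T : Finset ℕ} {n : ℕ} (h : ∀ x ∈ T, x < n) :
    ∑ a ∈ T, 2 ^ a < 2 ^ n := by
  have hsub : T ⊆ Finset.range n := fun x hx => Finset.mem_range.2 (h x hx)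
  calc ∑ a ∈ T, 2 ^ a ≤ ∑ a ∈ Finset.range n, 2 ^ a :=
        Finset.sum_le_sum_of_subset hsub
    _ = 2 ^ n - 1 := sum_range_two_pow n
    _ < 2 ^ n := by have := Nat.one_le_two_pow (n := n); omega

lemma testBit_sum_two_pow (T : Finset ℕ) (i : ℕ) :
    Nat.testBit (∑ a ∈ T, 2 ^ a) i = true ↔ i ∈ T := by
  induction T using Finset.induction_on_max with
  | empty => simp
  | insert a s ha ih =>
      rw [Finset.sum_insert (fun h => lt_irrefl a (ha a h))]
      rcases lt_trichotomy i a with hlt | rfl | hgt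
      · rw [Nat.testBit_two_pow_add_gt hlt, ih, Finset.mem_insert]
        constructor
        · exact fun h => Or.inr h
        · rintro (rfl | h)
          · omega
          · exact h
      · rw [Nat.testBit_two_pow_add_eq,
          Nat.testBit_lt_two_pow (sum_two_pow_lt ha)]
        simp
      · have hlt : 2 ^ a + ∑ x ∈ s, 2 ^ x < 2 ^ i := by
          have h1 : ∑ x ∈ s, 2 ^ x < 2 ^ a := sum_two_pow_lt ha
          have h2 : 2 ^ (a + 1) ≤ 2 ^ i := Nat.pow_le_pow_right (by norm_num) hgt
          have h3 : 2 ^ (a + 1) = 2 ^ a + 2 ^ a := by ring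
          omega
        rw [Nat.testBit_lt_two_pow hlt]
        simp only [Bool.false_eq_true, false_iff, Finset.mem_insert]
        rintro (rfl | h)
        · omega
        · exact absurd (ha i h) (by omega)

/-- `Gk k` is `K_k`-free and has the extension property relative to `K_k`-free graphs. -/
theorem Gk_cliqueFree_and_extension (k : ℕ) (hk : 3 ≤ k) :
    (Gk k).CliqueFree k ∧
    ∀ J D : Finset (Vk k), Disjoint J D →
      (¬ ∃ s : Finset (Vk k), s ⊆ J ∧ (Gk k).IsNClique (k - 1) s) →
      ∃ v : Vk k, v ∉ J ∧ v ∉ D ∧ (∀ j ∈ J, (Gk k).Adj v j) ∧ ∀ d ∈ D, ¬ (Gk k).Adj v d := by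
  constructor
  · -- K_k-free
    intro s hs
    obtain ⟨hclique, hcard⟩ := hs
    have hne : s.Nonempty := by rw [← Finset.card_pos, hcard]; omega
    obtain ⟨x, hx, hmax⟩ := s.exists_max_image (fun y => y.val) hne
    apply x.2
    refine ⟨(s.erase x).image Subtype.val, ?_, ?_, ?_⟩
    · rw [Finset.card_image_of_injective _ Subtype.coe_injective,
        Finset.card_erase_of_mem hx, hcard]
    · intro a ha
      obtain ⟨y, hy, rfl⟩ := Finset.mem_image.1 ha
      have hyx : y ≠ x := Finset.ne_of_mem_erase hy
      have hadj := hclique (Finset.mem_coe.2 hx)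
        (Finset.mem_coe.2 (Finset.mem_of_mem_erase hy)) hyx.symm
      rcases hadj.2 with h | h
      · exact h
      · exfalso
        have h1 : 2 ^ x.val ≤ y.val := Nat.ge_two_pow_of_testBit h
        have h2 : y.val ≤ x.val := hmax y (Finset.mem_of_mem_erase hy)
        have h3 : x.val < 2 ^ x.val := Nat.lt_two_pow_self
        omega
    · intro a ha b hb hab
      obtain ⟨y, hy, rfl⟩ := Finset.mem_image.1 ha
      obtain ⟨z, hz, rfl⟩ := Finset.mem_image.1 hb
      have hyz : y ≠ z := fun h => hab (by rw [h])
      exact (hclique (Finset.mem_coe.2 (Finset.mem_of_mem_erase hy))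
        (Finset.mem_coe.2 (Finset.mem_of_mem_erase hz)) hyz).2
  · -- extension property
    intro J D hdisj hJ
    classical
    set b := (J ∪ D).sup (fun y => y.val) with hb_def
    set t := 2 ^ (b + 1) with ht_def
    set T := insert t (J.image Subtype.val) with hT_def
    set v := ∑ a ∈ T, 2 ^ a with hv_def
    have hble : ∀ y ∈ J ∪ D, y.val ≤ b := fun y hy => Finset.le_sup hy
    have hbt : b < t := by
      have := Nat.lt_two_pow_self (n := b + 1)
      omega
    have htv : 2 ^ t ≤ v := Finset.single_le_sum (fun a _ => Nat.zero_le _)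
      (Finset.mem_insert_self t _)
    have htlt : t < 2 ^ t := Nat.lt_two_pow_self (n := t)
    have hvgt : ∀ y, y ∈ J ∪ D → y.val < v := by
      intro y hy
      have := hble y hy
      omega
    have hbit : ∀ i, Nat.testBit v i = true ↔ i ∈ T := fun i => testBit_sum_two_pow T i
    -- v ∈ Vk k
    have hvVk : v ∈ Vk k := by
      rintro ⟨S, hcard, hmem, hcompl⟩
      have hST : ∀ a ∈ S, a ∈ T := fun a ha => (hbit a).1 (hmem a ha)
      by_cases htS : t ∈ S
      · have hcard2 : 2 ≤ S.card := by omega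
        have hne : (S.erase t).Nonempty := by
          rw [← Finset.card_pos, Finset.card_erase_of_mem htS]; omega
        obtain ⟨a, haE⟩ := hne
        have haS : a ∈ S := Finset.mem_of_mem_erase haE
        have hat : a ≠ t := Finset.ne_of_mem_erase haE
        have haT : a ∈ T := hST a haS
        have hab : a ≤ b := by
          rcases Finset.mem_insert.1 haT with h | h
          · exact absurd h hat
          · obtain ⟨y, hy, rfl⟩ := Finset.mem_image.1 h
            exact hble y (Finset.mem_union_left _ hy)
        rcases hcompl a haS t htS hat with h | h
        · have : Nat.testBit a t = false := Nat.testBit_lt_two_pow (by omega)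
          rw [h] at this; exact absurd this (by simp)
        · rw [ht_def, Nat.testBit_two_pow] at h
          have hne' : b + 1 ≠ a := by omega
          simp [hne'] at h
      · apply hJ
        have hSJ : ∀ a ∈ S, a ∈ J.image Subtype.val := by
          intro a ha
          rcases Finset.mem_insert.1 (hST a ha) with h | h
          · exact absurd (h ▸ ha) htS
          · exact h
        set s : Finset (Vk k) := J.filter (fun y => y.val ∈ S) with hs_def
        have himg : s.image Subtype.val = S := by
          ext a
          constructor
          · intro ha
            obtain ⟨y, hy, rfl⟩ := Finset.mem_image.1 ha
            exact (Finset.mem_filter.1 hy).2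
          · intro ha
            obtain ⟨y, hy, rfl⟩ := Finset.mem_image.1 (hSJ a ha)
            exact Finset.mem_image_of_mem _ (Finset.mem_filter.2 ⟨hy, ha⟩)
        refine ⟨s, Finset.filter_subset _ _, ?_, ?_⟩
        · intro y hy z hz hyz
          have hy' := Finset.mem_filter.1 (Finset.mem_coe.1 hy)
          have hz' := Finset.mem_filter.1 (Finset.mem_coe.1 hz)
          have hne' : y.val ≠ z.val := fun h => hyz (Subtype.ext h)
          exact ⟨hne', hcompl _ hy'.2 _ hz'.2 hne'⟩
        · rw [← hcard, ← himg,
            Finset.card_image_of_injective _ Subtype.coe_injective]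
    refine ⟨⟨v, hvVk⟩, ?_, ?_, ?_, ?_⟩
    · intro hmem
      exact lt_irrefl v (hvgt ⟨v, hvVk⟩ (Finset.mem_union_left _ hmem))
    · intro hmem
      exact lt_irrefl v (hvgt ⟨v, hvVk⟩ (Finset.mem_union_right _ hmem))
    · intro j hj
      have hjv : j.val < v := hvgt j (Finset.mem_union_left _ hj)
      refine ⟨show v ≠ j.val by omega, Or.inl ?_⟩
      exact (hbit _).2 (Finset.mem_insert_of_mem (Finset.mem_image_of_mem _ hj))
    · rintro d hd ⟨hne, h | h⟩
      · rcases Finset.mem_insert.1 ((hbit _).1 h) with heq | hmem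
        · have := hble d (Finset.mem_union_right _ hd); omega
        · obtain ⟨y, hy, hyd⟩ := Finset.mem_image.1 hmem
          have hyd' : y = d := Subtype.ext hyd
          exact Finset.disjoint_left.1 hdisj (hyd' ▸ hy) hd
      · have hdv : d.val < v := hvgt d (Finset.mem_union_right _ hd)
        have hlt : d.val < 2 ^ v := lt_of_lt_of_le hdv (Nat.lt_two_pow_self (n := v)).le
        rw [Nat.testBit_lt_two_pow hlt] at h
        exact absurd h (by simp)
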